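/- If two straight-line trajectories h_i(t) = g_i + t(f_i - g_i) and h_j(t) = g_j + t(f_j - g_j), t ∈ [0,1], satisfy ‖g_i - g_j‖ ≥ 2√2 r and ‖f_i - f_j‖ ≥ 2√2 r, and additionally ⟨g_i - g_j, f_i - f_j⟩ ≥ 0, then ‖h_i(t) - h_j(t)‖ ≥ 2r for all t ∈ [0,1], i.e., the two UAVs of radius r never collide. -/

import Mathlib

theorem stmt_13 (m : ℕ) (gi gj fi fj : EuclideanSpace ℝ (Fin m)) (r : ℝ) (hr : 0 < r)
    (hg : ‖gi - gj‖ ≥ 2 * Real.sqrt 2 * r)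
    (hf : ‖fi - fj‖ ≥ 2 * Real.sqrt 2 * r)
    (hinner : 0 ≤ inner (gi - gj) (fi - fj) (𝕜 := ℝ)) :
    ∀ t ∈ Set.Icc (0:ℝ) 1,
      2 * r ≤ ‖(gi + t • (fi - gi)) - (gj + t • (fj - gj))‖ := by
  intro t ht
  obtain ⟨ht0, ht1⟩ := ht
  set g := gi - gj
  set f := fi - fj
  have hd : (gi + t • (fi - gi)) - (gj + t • (fj - gj)) = (1 - t) • g + t • f := by
    simp only [g, f]
    module
  rw [hd]
  have h8 : (2 * Real.sqrt 2 * r) ^ 2 = 8 * r ^ 2 := by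
    have : Real.sqrt 2 ^ 2 = 2 := Real.sq_sqrt (by norm_num)
    ring_nf
    nlinarith [this]
  have hg2 : 8 * r ^ 2 ≤ ‖g‖ ^ 2 := by
    have := pow_le_pow_left₀ (by positivity) hg 2
    linarith [h8 ▸ this]
  have hf2 : 8 * r ^ 2 ≤ ‖f‖ ^ 2 := by
    have := pow_le_pow_left₀ (by positivity) hf 2
    linarith [h8 ▸ this]
  have hnorm : ‖(1 - t) • g + t • f‖ ^ 2 =
      (1 - t) ^ 2 * ‖g‖ ^ 2 + 2 * ((1 - t) * t) * inner ℝ g f + t ^ 2 * ‖f‖ ^ 2 := by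
    rw [norm_add_sq_real, real_inner_smul_left, real_inner_smul_right,
      norm_smul, norm_smul]
    rw [Real.norm_eq_abs, Real.norm_eq_abs, abs_of_nonneg ht0,
      abs_of_nonneg (by linarith : (0:ℝ) ≤ 1 - t)]
    ring
  have hsq : (2 * r) ^ 2 ≤ ‖(1 - t) • g + t • f‖ ^ 2 := by
    rw [hnorm]
    nlinarith [mul_nonneg (mul_nonneg (by linarith : (0:ℝ) ≤ 1 - t) ht0) hinner,
      sq_nonneg (1 - 2 * t)]
  nlinarith [hsq, norm_nonneg ((1 - t) • g + t • f)]
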